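/- Let A be a commutative ring. Let T_A ⊆ A ⊗_ℤ A be the subgroup generated by all x ⊗ (a²y) − (a²x) ⊗ y and x ⊗ (2ay) − (2ax) ⊗ y for a, x, y ∈ A, and write Q = (A ⊗_ℤ A)/T_A. Let 2A denote the ideal {2a : a ∈ A}. Then: (1) the map ι : 2A → Q, 2a ↦ class of (2a) ⊗ 1, is a well-defined injective homomorphism of abelian groups; (2) the cokernel of ι is isomorphic to (A/2 ⊗_ℤ A/2)/T', where A/2 = A/2A and T' is the subgroup generated by all x̄ ⊗ (ā² ȳ) − (ā² x̄) ⊗ ȳ for ā, x̄, ȳ ∈ A/2. In other words, there is a short exact sequence 0 → 2A → Q → (A/2 ⊗_ℤ A/2)/T' → 0. -/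

import Mathlib

open TensorProduct

/-- Let `A` be a commutative ring, `T_A ⊆ A ⊗_ℤ A` the subgroup generated by
`x ⊗ (a²y) − (a²x) ⊗ y` and `x ⊗ (2ay) − (2ax) ⊗ y`, and `Q = (A ⊗_ℤ A)/T_A`. Then
`ι : 2A → Q`, `2a ↦ [(2a) ⊗ 1]`, is a well-defined injective additive map, and there is
a short exact sequence `0 → 2A → Q → (A/2 ⊗_ℤ A/2)/T' → 0`, where the third map is
induced by the quotient map and `T'` is generated by the elements
`x̄ ⊗ (ā²ȳ) − (ā²x̄) ⊗ ȳ`. -/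
theorem thr_pi0_ses (A : Type*) [CommRing A]
    (T : AddSubgroup (A ⊗[ℤ] A))
    (hT : T = AddSubgroup.closure
      {z : A ⊗[ℤ] A | ∃ a x y : A,
        z = x ⊗ₜ[ℤ] (a ^ 2 * y) - (a ^ 2 * x) ⊗ₜ[ℤ] y ∨
        z = x ⊗ₜ[ℤ] (2 * a * y) - (2 * a * x) ⊗ₜ[ℤ] y})
    (T' : AddSubgroup ((A ⧸ Ideal.span {(2 : A)}) ⊗[ℤ] (A ⧸ Ideal.span {(2 : A)})))
    (hT' : T' = AddSubgroup.closure
      {z | ∃ a x y : A ⧸ Ideal.span {(2 : A)},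
        z = x ⊗ₜ[ℤ] (a ^ 2 * y) - (a ^ 2 * x) ⊗ₜ[ℤ] y}) :
    let ι : ↥(Ideal.span {(2 : A)}) → (A ⊗[ℤ] A) ⧸ T := fun x =>
      QuotientAddGroup.mk ((x : A) ⊗ₜ[ℤ] (1 : A))
    -- `ι` is a well-defined injective homomorphism of abelian groups
    Function.Injective ι ∧
    (∀ x y : ↥(Ideal.span {(2 : A)}), ι (x + y) = ι x + ι y) ∧
    -- the cokernel of `ι` is `(A/2 ⊗ A/2)/T'`, via the map induced by the quotient map
    ∃ π : (A ⊗[ℤ] A) ⧸ T →+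
        ((A ⧸ Ideal.span {(2 : A)}) ⊗[ℤ] (A ⧸ Ideal.span {(2 : A)})) ⧸ T',
      (∀ x y : A, π (QuotientAddGroup.mk (x ⊗ₜ[ℤ] y)) =
        QuotientAddGroup.mk
          ((Ideal.Quotient.mk (Ideal.span {(2 : A)}) x) ⊗ₜ[ℤ]
            (Ideal.Quotient.mk (Ideal.span {(2 : A)}) y))) ∧
      Function.Surjective π ∧
      ∀ q : (A ⊗[ℤ] A) ⧸ T, π q = 0 ↔ q ∈ Set.range ι := by
  intro ι
  -- the multiplication map kills T, giving a retraction used for injectivity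
  have hTmul : T ≤ (LinearMap.mul' ℤ A).toAddMonoidHom.ker := by
    rw [hT, AddSubgroup.closure_le]
    rintro z ⟨a, x, y, h | h⟩ <;>
      simp [h, AddMonoidHom.mem_ker, LinearMap.mul'_apply, mul_comm, mul_assoc, mul_left_comm]
  let μ : (A ⊗[ℤ] A) ⧸ T →+ A :=
    QuotientAddGroup.lift T (LinearMap.mul' ℤ A).toAddMonoidHom hTmul
  have hμι : ∀ x : ↥(Ideal.span {(2 : A)}), μ (ι x) = (x : A) := by
    intro x
    show μ (QuotientAddGroup.mk ((x : A) ⊗ₜ[ℤ] (1 : A))) = (x : A)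
    rw [QuotientAddGroup.lift_mk]
    simp [LinearMap.mul'_apply]
  have hinj : Function.Injective ι := by
    intro x y h
    have := congrArg μ h
    rw [hμι, hμι] at this
    exact Subtype.ext this
  have hadd : ∀ x y : ↥(Ideal.span {(2 : A)}), ι (x + y) = ι x + ι y := by
    intro x y
    show QuotientAddGroup.mk (((x + y : ↥(Ideal.span {(2 : A)})) : A) ⊗ₜ[ℤ] (1 : A)) =
      QuotientAddGroup.mk ((x : A) ⊗ₜ[ℤ] (1 : A)) + QuotientAddGroup.mk ((y : A) ⊗ₜ[ℤ] (1 : A))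
    rw [← QuotientAddGroup.mk_add]
    congr 1
    rw [Submodule.coe_add]
    exact add_tmul _ _ _
  have hneg : ∀ x : ↥(Ideal.span {(2 : A)}), ι (-x) = -ι x := by
    intro x
    show QuotientAddGroup.mk (((-x : ↥(Ideal.span {(2 : A)})) : A) ⊗ₜ[ℤ] (1 : A)) =
      -QuotientAddGroup.mk ((x : A) ⊗ₜ[ℤ] (1 : A))
    rw [← QuotientAddGroup.mk_neg]
    congr 1
  refine ⟨hinj, hadd, ?_⟩
  let q : A →ₗ[ℤ] A ⧸ Ideal.span {(2 : A)} :=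
    (Ideal.Quotient.mk (Ideal.span {(2 : A)})).toAddMonoidHom.toIntLinearMap
  have hq : ∀ a : A, q a = Ideal.Quotient.mk (Ideal.span {(2 : A)}) a := fun _ => rfl
  have hqsurj : Function.Surjective q := Ideal.Quotient.mk_surjective
  let f : A ⊗[ℤ] A →ₗ[ℤ] (A ⧸ Ideal.span {(2 : A)}) ⊗[ℤ] (A ⧸ Ideal.span {(2 : A)}) :=
    TensorProduct.map q q
  have hftmul : ∀ x y : A, f (x ⊗ₜ[ℤ] y) =
      (Ideal.Quotient.mk (Ideal.span {(2 : A)}) x) ⊗ₜ[ℤ]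
        (Ideal.Quotient.mk (Ideal.span {(2 : A)}) y) := fun _ _ => rfl
  have h2 : Ideal.Quotient.mk (Ideal.span {(2 : A)}) (2 : A) = 0 :=
    Ideal.Quotient.eq_zero_iff_mem.mpr (Ideal.mem_span_singleton_self 2)
  -- f kills T modulo T'
  have hTker : T ≤ ((QuotientAddGroup.mk' T').comp f.toAddMonoidHom).ker := by
    rw [hT, AddSubgroup.closure_le]
    rintro z ⟨a, x, y, h | h⟩ <;>
      subst h <;>
      simp only [SetLike.mem_coe, AddMonoidHom.mem_ker, AddMonoidHom.coe_comp,
        Function.comp_apply, LinearMap.toAddMonoidHom_coe, map_sub, hftmul,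
        QuotientAddGroup.mk'_apply, map_mul, map_pow]
    · rw [← QuotientAddGroup.mk_sub, QuotientAddGroup.eq_zero_iff, hT']
      exact AddSubgroup.subset_closure
        ⟨Ideal.Quotient.mk (Ideal.span {(2 : A)}) a,
          Ideal.Quotient.mk (Ideal.span {(2 : A)}) x,
          Ideal.Quotient.mk (Ideal.span {(2 : A)}) y, rfl⟩
    · rw [h2]
      simp
  let π : (A ⊗[ℤ] A) ⧸ T →+
      ((A ⧸ Ideal.span {(2 : A)}) ⊗[ℤ] (A ⧸ Ideal.span {(2 : A)})) ⧸ T' :=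
    QuotientAddGroup.lift T ((QuotientAddGroup.mk' T').comp f.toAddMonoidHom) hTker
  have hπmk : ∀ z : A ⊗[ℤ] A,
      π (QuotientAddGroup.mk z) = QuotientAddGroup.mk (f z) := fun _ => rfl
  refine ⟨π, fun x y => by rw [hπmk, hftmul], ?_, ?_⟩
  · -- surjectivity
    intro b
    obtain ⟨w, rfl⟩ := QuotientAddGroup.mk_surjective b
    obtain ⟨z, rfl⟩ := TensorProduct.map_surjective hqsurj hqsurj w
    exact ⟨QuotientAddGroup.mk z, hπmk z⟩
  · -- kernel = range ι
    set C : AddSubgroup (A ⊗[ℤ] A) :=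
      AddSubgroup.closure {w | ∃ a : A, w = (2 * a) ⊗ₜ[ℤ] (1 : A)} with hC
    set S : AddSubgroup (A ⊗[ℤ] A) := T ⊔ C with hS
    have hgenT : ∀ a x y : A, x ⊗ₜ[ℤ] (2 * a * y) - (2 * a * x) ⊗ₜ[ℤ] y ∈ T := by
      intro a x y
      rw [hT]
      exact AddSubgroup.subset_closure ⟨a, x, y, Or.inr rfl⟩
    have hgenC : ∀ a : A, (2 * a) ⊗ₜ[ℤ] (1 : A) ∈ C := fun a =>
      AddSubgroup.subset_closure ⟨a, rfl⟩
    have hC1 : ∀ x b : A, x ⊗ₜ[ℤ] (2 * b) ∈ S := by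
      intro x b
      have key : x ⊗ₜ[ℤ] (2 * b) =
          (x ⊗ₜ[ℤ] (2 * b * 1) - (2 * b * x) ⊗ₜ[ℤ] (1 : A)) + (2 * (b * x)) ⊗ₜ[ℤ] (1 : A) := by
        rw [mul_one, show 2 * (b * x) = 2 * b * x by ring]
        abel
      rw [key]
      exact add_mem (AddSubgroup.mem_sup_left (hgenT b x 1))
        (AddSubgroup.mem_sup_right (hgenC (b * x)))
    have hC2 : ∀ b y : A, (2 * b) ⊗ₜ[ℤ] y ∈ S := by
      intro b y
      have key : (2 * b) ⊗ₜ[ℤ] y =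
          (((1 : A) ⊗ₜ[ℤ] (2 * (b * y) * 1) - (2 * (b * y) * 1) ⊗ₜ[ℤ] (1 : A)) -
            ((1 : A) ⊗ₜ[ℤ] (2 * b * y) - (2 * b * 1) ⊗ₜ[ℤ] y)) +
            (2 * (b * y)) ⊗ₜ[ℤ] (1 : A) := by
        rw [mul_one, mul_one, show 2 * (b * y) = 2 * b * y by ring]
        abel
      rw [key]
      exact add_mem (AddSubgroup.mem_sup_left (sub_mem (hgenT (b * y) 1 1) (hgenT b 1 y)))
        (AddSubgroup.mem_sup_right (hgenC (b * y)))
    -- images of the two partial tensors of the kernel of q are in S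
    have hlT : ∀ m : A ⊗[ℤ] ↥(LinearMap.ker q),
        LinearMap.lTensor A (LinearMap.ker q).subtype m ∈ S := by
      intro m
      induction m using TensorProduct.induction_on with
      | zero => simpa using zero_mem S
      | tmul x c =>
        rw [LinearMap.lTensor_tmul]
        obtain ⟨d, hd⟩ := Ideal.mem_span_singleton'.mp
          (Ideal.Quotient.eq_zero_iff_mem.mp c.2)
        have hce : ((LinearMap.ker q).subtype c : A) = 2 * d := by
          simp [← hd, mul_comm]
        rw [hce]
        exact hC1 x d
      | add m₁ m₂ h₁ h₂ =>
        rw [map_add]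
        exact add_mem h₁ h₂
    have hrT : ∀ m : ↥(LinearMap.ker q) ⊗[ℤ] A,
        LinearMap.rTensor A (LinearMap.ker q).subtype m ∈ S := by
      intro m
      induction m using TensorProduct.induction_on with
      | zero => simpa using zero_mem S
      | tmul c y =>
        rw [LinearMap.rTensor_tmul]
        obtain ⟨d, hd⟩ := Ideal.mem_span_singleton'.mp
          (Ideal.Quotient.eq_zero_iff_mem.mp c.2)
        have hce : ((LinearMap.ker q).subtype c : A) = 2 * d := by
          simp [← hd, mul_comm]
        rw [hce]
        exact hC2 d y
      | add m₁ m₂ h₁ h₂ =>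
        rw [map_add]
        exact add_mem h₁ h₂
    -- the kernel of f is contained in S
    have hkerf : ∀ w : A ⊗[ℤ] A, f w = 0 → w ∈ S := by
      intro w hw
      have hker : w ∈ LinearMap.ker (TensorProduct.map q q) := hw
      rw [TensorProduct.map_ker (LinearMap.exact_subtype_ker_map q) hqsurj
        (LinearMap.exact_subtype_ker_map q) hqsurj] at hker
      obtain ⟨u, hu, v, hv, rfl⟩ := Submodule.mem_sup.mp hker
      obtain ⟨m₁, rfl⟩ := hu
      obtain ⟨m₂, rfl⟩ := hv
      exact add_mem (hlT m₁) (hrT m₂)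
    -- T' is contained in the image of T
    have hT'le : T' ≤ AddSubgroup.map f.toAddMonoidHom T := by
      rw [hT', AddSubgroup.closure_le]
      rintro z ⟨a, x, y, rfl⟩
      obtain ⟨a', rfl⟩ := Ideal.Quotient.mk_surjective a
      obtain ⟨x', rfl⟩ := Ideal.Quotient.mk_surjective x
      obtain ⟨y', rfl⟩ := Ideal.Quotient.mk_surjective y
      refine ⟨x' ⊗ₜ[ℤ] (a' ^ 2 * y') - (a' ^ 2 * x') ⊗ₜ[ℤ] y', ?_, ?_⟩
      · rw [hT]
        exact AddSubgroup.subset_closure ⟨a', x', y', Or.inl rfl⟩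
      · simp only [LinearMap.toAddMonoidHom_coe, map_sub, hftmul, map_mul, map_pow]
    intro qq
    constructor
    · intro hq0
      obtain ⟨z, rfl⟩ := QuotientAddGroup.mk_surjective qq
      rw [hπmk, QuotientAddGroup.eq_zero_iff] at hq0
      obtain ⟨t, htT, hft⟩ := hT'le hq0
      have hzS : z ∈ S := by
        have h1 : z - t ∈ S := hkerf _ (by
          rw [map_sub]
          rw [show (f.toAddMonoidHom t :
            (A ⧸ Ideal.span {(2 : A)}) ⊗[ℤ] (A ⧸ Ideal.span {(2 : A)})) = f t from rfl] at hft
          rw [hft, sub_self])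
        have h2' := add_mem (AddSubgroup.mem_sup_left htT : t ∈ S) h1
        simpa using h2'
      obtain ⟨t', ht', c, hcC, hsum⟩ := AddSubgroup.mem_sup.mp hzS
      have hmkz : (QuotientAddGroup.mk z : (A ⊗[ℤ] A) ⧸ T) = QuotientAddGroup.mk c := by
        rw [← hsum, QuotientAddGroup.mk_add,
          (QuotientAddGroup.eq_zero_iff t').mpr ht', zero_add]
      rw [hmkz]
      clear hmkz hsum hzS hq0 hft
      induction hcC using AddSubgroup.closure_induction with
      | mem w hw =>
        obtain ⟨a, rfl⟩ := hw
        exact ⟨⟨2 * a, Ideal.mem_span_singleton'.mpr ⟨a, mul_comm a 2⟩⟩, rfl⟩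
      | zero =>
        refine ⟨0, ?_⟩
        show QuotientAddGroup.mk _ = _
        rw [ZeroMemClass.coe_zero, zero_tmul]
      | add x y hx hy ihx ihy =>
        obtain ⟨u, hu⟩ := ihx
        obtain ⟨v, hv⟩ := ihy
        exact ⟨u + v, by rw [hadd, hu, hv, QuotientAddGroup.mk_add]⟩
      | neg x hx ihx =>
        obtain ⟨u, hu⟩ := ihx
        exact ⟨-u, by rw [hneg, hu, QuotientAddGroup.mk_neg]⟩
    · rintro ⟨x, rfl⟩
      show π (QuotientAddGroup.mk _) = 0
      rw [hπmk, hftmul, Ideal.Quotient.eq_zero_iff_mem.mpr x.2, zero_tmul]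
      rfl
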